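/- With X → S the minimal regular proper model of a genus-1 curve over a complete DVR with algebraically closed residue field, and X_s = Σᵢ nᵢ Cᵢ its special fiber, the relative dualizing sheaf ω_{X/S} satisfies ω_{X/S}·Cᵢ = 0 for every irreducible component Cᵢ of the special fiber. -/
import Mathlib


/-- Intersection theory on the minimal regular proper model `X → S` of a genus-1 curve
over a complete discrete valuation ring with algebraically closed residue field, with
special fiber `X_s = Σᵢ nᵢ Cᵢ`: the relative dualizing sheaf `ω_{X/S}` satisfies
`ω_{X/S} · Cᵢ = 0` for every irreducible component `Cᵢ` of the special fiber.

The data is presented via the group `DivCl` of divisor (line bundle) classes on the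
regular surface `X` together with the intersection pairing:
`C i` are the classes of the (`r ≥ 1`) irreducible components of `X_s`, `n i > 0` their
multiplicities, `ω` the class of `ω_{X/S}`, and `g i` the genus of `Cᵢ`.  The hypotheses
are: the pairing is symmetric; distinct components meet nonnegatively; the special fiber
is connected; each `Cᵢ` and `ω` (trivial on the generic fiber) meet the full fiber
`Σ nⱼ Cⱼ` with intersection number `0`; adjunction `2g(Cᵢ) - 2 = (ω + Cᵢ)·Cᵢ`; and
minimality: no component is a `(-1)`-curve of genus `0`. -/
theorem stmt_6
    (DivCl : Type) [AddCommGroup DivCl]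
    (inter : DivCl →+ DivCl →+ ℤ)
    (hsym : ∀ a b, inter a b = inter b a)
    (ι : Type) [Fintype ι] [Nonempty ι]
    (C : ι → DivCl) (n : ι → ℕ) (hn : ∀ i, 0 < n i)
    (ω : DivCl) (g : ι → ℕ)
    -- distinct components of the special fiber meet nonnegatively
    (hmeet : ∀ i j, i ≠ j → 0 ≤ inter (C i) (C j))
    -- the special fiber is connected
    (hconn : 2 ≤ Fintype.card ι → ∀ i, ∃ j, j ≠ i ∧ 0 < inter (C i) (C j))
    -- each component has intersection number zero with the full special fiber
    (hfib : ∀ i, inter (C i) (∑ j, (n j : ℤ) • C j) = 0)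
    -- `ω_{X/S}` is trivial on the generic fiber, hence `ω_{X/S} · X_s = 0`
    (hωfib : inter ω (∑ j, (n j : ℤ) • C j) = 0)
    -- adjunction formula on the regular surface `X`
    (hadj : ∀ i, 2 * (g i : ℤ) - 2 = inter (ω + C i) (C i))
    -- minimality: no `(-1)`-curve of genus `0` in the special fiber
    (hmin : ∀ i, ¬(g i = 0 ∧ inter (C i) (C i) = -1)) :
    ∀ i, inter ω (C i) = 0 := by

  haveI : DecidableEq ι := Classical.decEq ι
  intro i
  have expand : ∀ a : DivCl, inter a (∑ j, (n j : ℤ) • C j)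
      = ∑ j, (n j : ℤ) * inter a (C j) := by
    intro a
    rw [map_sum]
    exact Finset.sum_congr rfl fun j _ => by rw [map_zsmul, smul_eq_mul]
  have hw' : ∑ j, (n j : ℤ) * inter ω (C j) = 0 := by rw [← expand]; exact hωfib
  have hfib' : ∀ k, (n k : ℤ) * inter (C k) (C k)
      + ∑ j ∈ Finset.univ.erase k, (n j : ℤ) * inter (C k) (C j) = 0 := by
    intro k
    rw [Finset.add_sum_erase _ (fun j => (n j : ℤ) * inter (C k) (C j)) (Finset.mem_univ k), ← expand]
    exact hfib k
  have herase_nonneg : ∀ k, ∀ j ∈ Finset.univ.erase k,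
      (0:ℤ) ≤ (n j : ℤ) * inter (C k) (C j) := fun k j hj =>
    mul_nonneg (Int.ofNat_nonneg _) (hmeet k j (Finset.ne_of_mem_erase hj).symm)
  have hadj' : ∀ k, inter ω (C k) = 2 * (g k : ℤ) - 2 - inter (C k) (C k) := by
    intro k
    have h := hadj k
    rw [map_add, AddMonoidHom.add_apply] at h
    linarith
  have hs_nonpos : ∀ k, inter (C k) (C k) ≤ 0 := by
    intro k
    have h2 := hfib' k
    have h1 := Finset.sum_nonneg (herase_nonneg k)
    have hnk : (1:ℤ) ≤ (n k : ℤ) := by exact_mod_cast hn k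
    nlinarith
  rcases lt_or_ge (Fintype.card ι) 2 with hcard | hcard
  · -- one component
    have hall : ∀ j : ι, j = i := by
      intro j
      obtain ⟨a, ha⟩ := Fintype.card_eq_one_iff.mp
        (le_antisymm (Nat.lt_succ_iff.mp hcard) Fintype.card_pos)
      exact (ha j).trans (ha i).symm
    have hs : ∑ j, (n j : ℤ) * inter ω (C j) = (n i : ℤ) * inter ω (C i) :=
      Finset.sum_eq_single_of_mem i (Finset.mem_univ i)
        (fun j _ hne => absurd (hall j) hne)
    rw [hs] at hw'
    have hnk : (0:ℤ) < (n i : ℤ) := by exact_mod_cast hn i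
    exact (mul_eq_zero.mp hw').resolve_left (by positivity)
  · -- at least two components
    have hnonneg : ∀ k, 0 ≤ inter ω (C k) := by
      intro k
      have had := hadj' k
      have hs := hs_nonpos k
      rcases Nat.eq_zero_or_pos (g k) with hg | hg
      · -- genus 0 : self-intersection ≠ -1 and ≠ 0
        have hne1 : inter (C k) (C k) ≠ -1 := fun h => hmin k ⟨hg, h⟩
        have hne0 : inter (C k) (C k) ≠ 0 := by
          intro h0
          have h2 := hfib' k
          rw [h0, mul_zero, zero_add] at h2
          obtain ⟨j, hjk, hjpos⟩ := hconn hcard k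
          have hjmem : j ∈ Finset.univ.erase k :=
            Finset.mem_erase.mpr ⟨hjk, Finset.mem_univ j⟩
          have := (Finset.sum_eq_zero_iff_of_nonneg (herase_nonneg k)).mp h2 j hjmem
          have hnj : (0:ℤ) < (n j : ℤ) := by exact_mod_cast hn j
          nlinarith
        have : inter (C k) (C k) ≤ -2 := by omega
        have hgz : (g k : ℤ) = 0 := by exact_mod_cast hg
        omega
      · have hg1 : (1:ℤ) ≤ (g k : ℤ) := by exact_mod_cast hg
        omega
    have := (Finset.sum_eq_zero_iff_of_nonneg
      (fun j _ => mul_nonneg (Int.ofNat_nonneg (n j)) (hnonneg j))).mp hw' i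
      (Finset.mem_univ i)
    have hnk : (0:ℤ) < (n i : ℤ) := by exact_mod_cast hn i
    exact (mul_eq_zero.mp this).resolve_left (by positivity)
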